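/- Assume SCH. Let (A_i)_{i∈κ} be infinite Boolean algebras with 2^κ < λ_i = π(A_i) for all i ∈ κ, and let D be an ultrafilter on κ. Then π(∏_{i∈κ} A_i / D) = |∏_{i∈κ} λ_i / D|. -/

import Mathlib

open Cardinal

universe u v

/-- The algebraic density `π A` of a Boolean algebra: the least cardinality of a
dense subset of `A \ {⊥}`. -/
noncomputable def piDensity (A : Type v) [BooleanAlgebra A] : Cardinal.{v} :=
  sInf {c | ∃ X : Set A, (∀ x ∈ X, x ≠ ⊥) ∧ (∀ a : A, a ≠ ⊥ → ∃ x ∈ X, x ≤ a) ∧ c = #X}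

section BUP

variable {ι : Type u} (D : Ultrafilter ι) (A : ι → Type u) [∀ i, BooleanAlgebra (A i)]

instance piBooleanRing : BooleanRing (∀ i, AsBoolRing (A i)) :=
  { Pi.ring with isIdempotentElem := fun f => funext fun i => BooleanRing.mul_self (f i) }

/-- The ideal of elements vanishing `D`-almost everywhere. -/
def upIdeal : Ideal (∀ i, AsBoolRing (A i)) where
  carrier := {f | {i | f i = 0} ∈ D}
  zero_mem' := by
    have : {i | (0 : ∀ i, AsBoolRing (A i)) i = 0} = Set.univ := by ext i; simp
    simp only [Set.mem_setOf_eq] at *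
    exact this ▸ Filter.univ_mem
  add_mem' := by
    intro f g hf hg
    filter_upwards [hf, hg] with i h1 h2
    simp only [Pi.add_apply, h1, h2, add_zero]
  smul_mem' := by
    intro c f hf
    filter_upwards [hf] with i h1
    simp only [smul_eq_mul, Pi.mul_apply, h1, mul_zero]

instance upQuotBooleanRing : BooleanRing ((∀ i, AsBoolRing (A i)) ⧸ upIdeal D A) :=
  { (inferInstance : CommRing ((∀ i, AsBoolRing (A i)) ⧸ upIdeal D A)) with
    isIdempotentElem := fun a => by
      obtain ⟨f, rfl⟩ := Ideal.Quotient.mk_surjective a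
      unfold IsIdempotentElem
      rw [← map_mul, BooleanRing.mul_self] }

/-- The Boolean ultraproduct `∏ᵢ Aᵢ / D`. -/
def BUP : Type u := AsBoolAlg ((∀ i, AsBoolRing (A i)) ⧸ upIdeal D A)

noncomputable instance : BooleanAlgebra (BUP D A) :=
  inferInstanceAs (BooleanAlgebra (AsBoolAlg _))

end BUP

section cardUP

variable {ι : Type u} (D : Ultrafilter ι)

/-- Set-theoretic ultraproduct of a family of cardinals, seen as the quotient of the
product of the corresponding sets of ordinals by `D`-almost-everywhere equality. -/
def cardSetoid (lam : ι → Cardinal.{u}) :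
    Setoid (∀ i, (lam i).ord.ToType) where
  r f g := {i | f i = g i} ∈ D
  iseqv := by
    refine ⟨fun f => by
      have : {i | f i = f i} = Set.univ := by ext i; simp
      rw [this]; exact Filter.univ_mem, fun {f g} h => ?_, fun {f g h} h1 h2 => ?_⟩
    · filter_upwards [h] with i hi using hi.symm
    · filter_upwards [h1, h2] with i hi1 hi2 using hi1.trans hi2

/-- The cardinality of the ultraproduct `∏ᵢ λᵢ / D` of a family of cardinals. -/
noncomputable def cardUP (lam : ι → Cardinal.{u}) : Cardinal.{u} :=
  #(Quotient (cardSetoid D lam))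

end cardUP

section Aux

open Ordinal Set

namespace PiDensityAux

universe w

/-! ### Ordinal index helpers -/

/-- The ordinal index of an element of `o.ToType`. -/
noncomputable def oidx {o : Ordinal.{w}} (x : o.ToType) : Ordinal.{w} :=
  (((Ordinal.ToType.mk (o := o))).symm x).1

theorem oidx_lt {o : Ordinal.{w}} (x : o.ToType) : oidx x < o :=
  (((Ordinal.ToType.mk (o := o))).symm x).2

theorem oidx_inj {o : Ordinal.{w}} : Function.Injective (oidx (o := o)) := fun x y h =>
  ((Ordinal.ToType.mk (o := o))).symm.injective (Subtype.ext h)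

theorem oidx_mono {o : Ordinal.{w}} {x y : o.ToType} (h : x ≤ y) : oidx x ≤ oidx y :=
  Subtype.coe_le_coe.2 ((((Ordinal.ToType.mk (o := o))).symm.le_iff_le).2 h)

theorem oidx_enum {o p : Ordinal.{w}} (h : p < o) :
    oidx ((Ordinal.ToType.mk (o := o)) ⟨p, h⟩) = p := by
  simp [oidx]

/-! ### Basic facts about `piDensity` -/

theorem piDensity_le_mk {B : Type w} [BooleanAlgebra B] (X : Set B) (h1 : ∀ x ∈ X, x ≠ ⊥)
    (h2 : ∀ a : B, a ≠ ⊥ → ∃ x ∈ X, x ≤ a) : piDensity B ≤ #X :=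
  csInf_le' ⟨X, h1, h2, rfl⟩

theorem exists_piDensity_set (B : Type w) [BooleanAlgebra B] :
    ∃ X : Set B, (∀ x ∈ X, x ≠ ⊥) ∧ (∀ a : B, a ≠ ⊥ → ∃ x ∈ X, x ≤ a) ∧ piDensity B = #X := by
  have hne : {c | ∃ X : Set B, (∀ x ∈ X, x ≠ ⊥) ∧ (∀ a : B, a ≠ ⊥ → ∃ x ∈ X, x ≤ a) ∧
      c = #X}.Nonempty :=
    ⟨#{a : B | a ≠ ⊥}, {a | a ≠ ⊥}, fun x hx => hx, fun a ha => ⟨a, ha, le_rfl⟩, rfl⟩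
  exact csInf_mem hne

/-- If `T` has cardinality smaller than the density, then `T` is not dense: there is a
nonzero element with no nonzero element of `T` below it. -/
theorem exists_avoid {B : Type w} [BooleanAlgebra B] (T : Set B) (hT : #T < piDensity B) :
    ∃ a : B, a ≠ ⊥ ∧ ∀ t ∈ T, t ≠ ⊥ → ¬ t ≤ a := by
  by_contra hcon
  push_neg at hcon
  have hd : piDensity B ≤ #({t ∈ T | t ≠ ⊥} : Set B) := by
    refine piDensity_le_mk _ (fun x hx => hx.2) fun a ha => ?_
    obtain ⟨t, ht, htb, hta⟩ := hcon a ha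
    exact ⟨t, ⟨ht, htb⟩, hta⟩
  exact absurd (hd.trans (Cardinal.mk_le_mk_of_subset (Set.sep_subset _ _))) hT.not_ge

theorem aleph0_le_piDensity (B : Type w) [BooleanAlgebra B] [Infinite B] :
    ℵ₀ ≤ piDensity B := by
  obtain ⟨X, h1, h2, hX⟩ := exists_piDensity_set B
  by_contra hlt
  rw [not_le, hX] at hlt
  -- `a ↦ {x ∈ X | x ≤ a}` is injective, so `#B ≤ 2 ^ #X`
  have key : ∀ a b : B, {x : X | (x : B) ≤ a} = {x : X | (x : B) ≤ b} → a ≤ b := by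
    intro a b hab
    by_contra hle
    have hne : a \ b ≠ ⊥ := fun hbot => hle (sdiff_eq_bot_iff.1 hbot)
    obtain ⟨x, hxX, hxle⟩ := h2 _ hne
    have hxa : x ≤ a := hxle.trans sdiff_le
    have hxb : (x : B) ≤ b := by
      have : (⟨x, hxX⟩ : X) ∈ {x : X | (x : B) ≤ a} := hxa
      rw [hab] at this
      exact this
    have hxbot : x ≤ (⊥ : B) := by
      have hb : b ⊓ (a \ b) = ⊥ := by
        exact inf_sdiff_self_right
      calc x ≤ b ⊓ (a \ b) := le_inf hxb hxle
        _ = ⊥ := hb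
    exact h1 x hxX (le_bot_iff.1 hxbot)
  have hinj : Function.Injective fun a : B => {x : X | (x : B) ≤ a} := by
    intro a b hab
    exact le_antisymm (key a b hab) (key b a hab.symm)
  have hBle : #B ≤ 2 ^ #X := by
    have := Cardinal.mk_le_of_injective hinj
    simpa [Cardinal.mk_set] using this
  have h2a : (2 : Cardinal.{w}) < ℵ₀ := by
    exact_mod_cast Cardinal.nat_lt_aleph0 2
  have hfin : #B < ℵ₀ := hBle.trans_lt (Cardinal.power_lt_aleph0 h2a hlt)
  have hinf : ℵ₀ ≤ #B := Cardinal.infinite_iff.1 inferInstance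
  exact absurd hfin (not_lt.2 hinf)

/-! ### API for the Boolean ultraproduct -/

variable {ι : Type u} (D : Ultrafilter ι) (A : ι → Type u) [∀ i, BooleanAlgebra (A i)]

/-- The canonical map from the product into the Boolean ultraproduct. -/
noncomputable def bmk (f : ∀ i, A i) : BUP D A :=
  toBoolAlg (Ideal.Quotient.mk (upIdeal D A) (fun i => toBoolRing (f i)))

theorem bmk_surjective : Function.Surjective (bmk D A) := by
  intro q
  obtain ⟨g, hg⟩ := Ideal.Quotient.mk_surjective (ofBoolAlg q)
  exact ⟨fun i => ofBoolRing (g i), by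
    unfold bmk
    have : (fun i => toBoolRing (ofBoolRing (g i))) = g := rfl
    rw [this, hg]
    rfl⟩

theorem bmk_eq_bmk {f g : ∀ i, A i} :
    bmk D A f = bmk D A g ↔ {i | f i = g i} ∈ D := by
  unfold bmk
  erw [show (toBoolAlg (Ideal.Quotient.mk (upIdeal D A) fun i => toBoolRing (f i)) =
      toBoolAlg (Ideal.Quotient.mk (upIdeal D A) fun i => toBoolRing (g i))) ↔
      (Ideal.Quotient.mk (upIdeal D A) fun i => toBoolRing (f i)) =
      (Ideal.Quotient.mk (upIdeal D A) fun i => toBoolRing (g i)) from Iff.rfl]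
  rw [Ideal.Quotient.eq]
  have : ((fun i => toBoolRing (f i)) - fun i => toBoolRing (g i)) ∈ upIdeal D A ↔
      {i | toBoolRing (f i) - toBoolRing (g i) = 0} ∈ D := Iff.rfl
  rw [this]
  have hset : {i | toBoolRing (f i) - toBoolRing (g i) = 0} = {i | f i = g i} := by
    ext i
    simp only [Set.mem_setOf_eq]
    constructor
    · intro h
      have := congrArg ofBoolRing h
      rw [ofBoolRing_sub, ofBoolRing_zero] at this
      exact symmDiff_eq_bot.1 this
    · intro h
      rw [h]
      simp
  rw [hset]

theorem bmk_bot : bmk D A (fun _ => ⊥) = ⊥ := by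
  unfold bmk
  have : (fun i => toBoolRing (⊥ : A i)) = (0 : ∀ i, AsBoolRing (A i)) := rfl
  rw [this, map_zero]
  rfl

theorem bmk_eq_bot_iff {f : ∀ i, A i} : bmk D A f = ⊥ ↔ {i | f i = ⊥} ∈ D := by
  rw [← bmk_bot D A, bmk_eq_bmk]

theorem bmk_inf (f g : ∀ i, A i) :
    bmk D A f ⊓ bmk D A g = bmk D A (fun i => f i ⊓ g i) := by
  unfold bmk
  have h1 : toBoolAlg (Ideal.Quotient.mk (upIdeal D A) fun i => toBoolRing (f i)) ⊓
      toBoolAlg (Ideal.Quotient.mk (upIdeal D A) fun i => toBoolRing (g i)) =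
      toBoolAlg ((Ideal.Quotient.mk (upIdeal D A) fun i => toBoolRing (f i)) *
        (Ideal.Quotient.mk (upIdeal D A) fun i => toBoolRing (g i))) := rfl
  erw [h1, ← map_mul]
  rfl

theorem bmk_le_bmk {f g : ∀ i, A i} :
    bmk D A f ≤ bmk D A g ↔ {i | f i ≤ g i} ∈ D := by
  rw [← inf_eq_left, bmk_inf, bmk_eq_bmk]
  have : {i | f i ⊓ g i = f i} = {i | f i ≤ g i} := by
    ext i; exact inf_eq_left
  rw [this]

theorem toType_nonempty_of_pos {x : Cardinal.{w}} (hx : 0 < x) : Nonempty x.ord.ToType := by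
  rw [Ordinal.toType_nonempty_iff_ne_zero]
  have h0 : (0 : Ordinal.{w}) < x.ord := by
    rw [Cardinal.lt_ord]
    simpa using hx
  exact h0.ne'

/-- `(∏ᵢ cᵢ) ^ k = ∏ᵢ (cᵢ ^ k)` for cardinals. -/
theorem prod_power {α : Type w} (f : α → Cardinal.{w}) (k : Cardinal.{w}) :
    (Cardinal.prod f) ^ k = Cardinal.prod (fun i => f i ^ k) := by
  induction k using Cardinal.inductionOn with
  | _ K =>
    have h1 : Cardinal.prod f = #(∀ i, (f i).out) := by
      rw [Cardinal.mk_pi]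
      exact congrArg _ (funext fun i => (Cardinal.mk_out (f i)).symm)
    rw [h1, Cardinal.power_def, Cardinal.mk_congr (Equiv.piComm fun (_ : K) (i : α) =>
      (f i).out), Cardinal.mk_pi]
    congr 1
    funext i
    conv_rhs => rw [← Cardinal.mk_out (f i)]
    rw [Cardinal.power_def]

/-- Key SCH consequence (Jech 5.22-style): if `2 ^ κ < c` then `c ^ κ ≤ c⁺`, and
moreover `c ^ κ = c` when `κ < cf c`. -/
theorem power_le_succ {κ : Cardinal.{w}}
    (SCH : ∀ l : Cardinal.{w}, ℵ₀ ≤ l → l.ord.cof < l → 2 ^ l.ord.cof < l →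
      l ^ l.ord.cof = Order.succ l)
    (hκ : ℵ₀ ≤ κ) (c : Cardinal.{w}) : ℵ₀ ≤ c → 2 ^ κ < c →
      c ^ κ ≤ Order.succ c ∧ (κ < c.ord.cof → c ^ κ = c) := by
  refine Cardinal.lt_wf.induction (C := fun c => ℵ₀ ≤ c → 2 ^ κ < c →
    c ^ κ ≤ Order.succ c ∧ (κ < c.ord.cof → c ^ κ = c)) c ?_
  clear c
  intro c IH hc h2c
  classical
  have h2κ : ℵ₀ ≤ 2 ^ κ := hκ.trans (Cardinal.cantor κ).le
  have hκc : κ < c := (Cardinal.cantor κ).trans h2c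
  have haleph0_lt : ℵ₀ < c := h2κ.trans_lt h2c
  have key : ∀ d : Cardinal.{w}, d < c → d ^ κ ≤ c := by
    intro d hd
    by_cases hd2 : d ≤ 2 ^ κ
    · calc d ^ κ ≤ (2 ^ κ) ^ κ := Cardinal.power_le_power_right hd2
        _ = 2 ^ (κ * κ) := Cardinal.power_mul.symm
        _ = 2 ^ κ := by rw [Cardinal.mul_eq_self hκ]
        _ ≤ c := h2c.le
    · have hd2' : 2 ^ κ < d := lt_of_not_ge hd2
      have hdinf : ℵ₀ ≤ d := h2κ.trans hd2'.le
      exact ((IH d hd hdinf hd2').1).trans (Order.succ_le_of_lt hd)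
  rcases lt_or_ge κ c.ord.cof with hcof | hcof
  · -- the "regular enough" case: all functions are bounded
    have hle : c ^ κ ≤ c := by
      have hrw : c ^ κ = #(κ.ord.ToType → c.ord.ToType) := by
        conv_lhs => rw [← Cardinal.mk_ord_toType c, ← Cardinal.mk_ord_toType κ]
        rw [Cardinal.power_def]
      set K := κ.ord.ToType
      set C := c.ord.ToType
      set B : Set.Iio c.ord → Set (K → C) := fun o => {f | ∀ x, oidx (f x) ≤ o.1} with hB
      have hcover : (⋃ o, B o) = Set.univ := by
        rw [Set.eq_univ_iff_forall]
        intro f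
        have hbf : (⨆ x, oidx (f x)) < c.ord := by
          apply Ordinal.iSup_lt_ord
          · rw [Cardinal.mk_ord_toType κ]; exact hcof
          · exact fun x => oidx_lt (f x)
        exact Set.mem_iUnion.2 ⟨⟨_, hbf⟩, fun x => Ordinal.le_iSup (fun x => oidx (f x)) x⟩
      have hBle : ∀ o : Set.Iio c.ord, #(B o) ≤ c := by
        intro o
        set d : Cardinal.{w} := (o.1).card ⊔ ℵ₀ with hd
        have hdc : d < c := max_lt (Cardinal.lt_ord.1 o.2) haleph0_lt
        have hmap : #(B o) ≤ d ^ κ := by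
          have hinj : Function.Injective (fun (f : B o) (x : K) =>
              (Ordinal.ToType.mk (o := (Order.succ o.1)))
                ⟨oidx (f.1 x), Order.lt_succ_iff.2 (f.2 x)⟩) := by
            intro f g hfg
            apply Subtype.ext
            funext x
            have := congrFun hfg x
            have h2 := ((Ordinal.ToType.mk (o := (Order.succ o.1)))).injective this
            exact oidx_inj (show oidx (f.1 x) = oidx (g.1 x) by
              simpa using Subtype.ext_iff.1 h2)
          have h1 : #(B o) ≤ #(K → (Order.succ o.1).ToType) :=
            Cardinal.mk_le_of_injective hinj
          have h2 : #(K → (Order.succ o.1).ToType) = ((Order.succ o.1).card) ^ κ := by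
            rw [show ((Order.succ o.1).card) = #((Order.succ o.1).ToType) from
              (Cardinal.mk_toType _).symm, show κ = #K from (Cardinal.mk_ord_toType κ).symm,
              Cardinal.power_def]
          have h3 : (Order.succ o.1).card ≤ d := by
            rw [Ordinal.card_succ]
            calc (o.1).card + 1 ≤ ((o.1).card ⊔ ℵ₀) + ((o.1).card ⊔ ℵ₀) :=
                add_le_add le_sup_left ((le_of_lt Cardinal.one_lt_aleph0).trans le_sup_right)
              _ = d := Cardinal.add_eq_self (le_sup_right)
          calc #(B o) ≤ ((Order.succ o.1).card) ^ κ := h1.trans_eq h2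
            _ ≤ d ^ κ := Cardinal.power_le_power_right h3
        exact hmap.trans (key d hdc)
      have hfinal : Cardinal.lift.{w + 1} #(K → C) ≤ Cardinal.lift.{w + 1} c := by
        have h1 : Cardinal.lift.{w + 1} #(K → C) ≤
            Cardinal.sum (fun o : Set.Iio c.ord => #(B o)) := by
          rw [← Cardinal.mk_univ, ← hcover]
          exact Cardinal.mk_iUnion_le_sum_mk_lift
        have h2 : Cardinal.sum (fun o : Set.Iio c.ord => #(B o)) ≤
            Cardinal.sum (fun _ : Set.Iio c.ord => c) :=
          Cardinal.sum_le_sum _ _ hBle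
        have h3 : Cardinal.sum (fun _ : Set.Iio c.ord => c) = Cardinal.lift.{w + 1} c := by
          rw [Cardinal.sum_const, Ordinal.mk_Iio_ordinal, Cardinal.card_ord,
            Cardinal.lift_lift, ← Cardinal.lift_mul, Cardinal.mul_eq_self hc]
        exact (h1.trans h2).trans_eq h3
      rw [hrw]
      exact Cardinal.lift_le.1 hfinal
    have hge : c ≤ c ^ κ := by
      conv_lhs => rw [← Cardinal.power_one c]
      exact Cardinal.power_le_power_left (ne_of_gt (Cardinal.aleph0_pos.trans_le hc)) ((le_of_lt Cardinal.one_lt_aleph0).trans hκ)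
    exact ⟨hle.trans (Order.le_succ c), fun _ => le_antisymm hle hge⟩
  · -- the singular case
    have hcof_lt : c.ord.cof < c := hcof.trans_lt hκc
    have h2cof : 2 ^ c.ord.cof < c :=
      lt_of_le_of_lt (Cardinal.power_le_power_left two_ne_zero hcof) h2c
    have hsucc_lt : ∀ x : Cardinal.{w}, x < c → Order.succ x < c := by
      intro x hx
      rcases lt_or_ge (Order.succ x) c with hlt | hge
      · exact hlt
      · exfalso
        have hcx : c = Order.succ x := le_antisymm hge (Order.succ_le_of_lt hx)
        have hreg : c.IsRegular := by
          rcases le_or_gt ℵ₀ x with hd | hd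
          · rw [hcx]; exact Cardinal.isRegular_succ hd
          · have h1 : Order.succ x ≤ ℵ₀ := Order.succ_le_of_lt hd
            have h2 : c = ℵ₀ := le_antisymm (hcx ▸ h1) hc
            rw [h2]; exact Cardinal.isRegular_aleph0
        rw [hreg.cof_eq] at hcof
        exact absurd (hcof.trans_lt hκc) (lt_irrefl _)
    obtain ⟨S, hSub, hScard⟩ := Order.exists_cof_eq c.ord.ToType
    rw [Ordinal.cof_toType] at hScard
    set d : S → Cardinal.{w} := fun s => Order.succ ((oidx s.1).card ⊔ ℵ₀) with hd
    have hdpos : ∀ s, (0 : Cardinal) < d s := fun s =>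
      lt_of_le_of_lt zero_le (Order.lt_succ _)
    have hdlt : ∀ s, d s < c := fun s =>
      hsucc_lt _ (max_lt (Cardinal.lt_ord.1 (oidx_lt s.1)) haleph0_lt)
    haveI hne : ∀ s : S, Nonempty ((d s).ord.ToType) := fun s =>
      toType_nonempty_of_pos (hdpos s)
    have hc_le : c ≤ Cardinal.prod d := by
      have hpd : Cardinal.prod d = #(∀ s : S, (d s).ord.ToType) := by
        rw [Cardinal.mk_pi]
        exact congrArg _ (funext fun s => (Cardinal.mk_ord_toType (d s)).symm)
      conv_lhs => rw [← Cardinal.mk_ord_toType c]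
      rw [hpd]
      have hinj : Function.Injective (fun (x : c.ord.ToType) (s : S) =>
          if h : oidx x < (d s).ord then (Ordinal.ToType.mk (o := (d s).ord)) ⟨oidx x, h⟩
          else Classical.arbitrary _) := by
        intro x y hxy
        obtain ⟨s, hsS, hs⟩ := hSub (max x y)
        have hbnd : ∀ z : c.ord.ToType, z ≤ s → oidx z < (d ⟨s, hsS⟩).ord := by
          intro z hz
          rw [Cardinal.lt_ord]
          exact lt_of_le_of_lt (le_sup_left.trans' (Ordinal.card_le_card (oidx_mono hz)))
            (Order.lt_succ _)
        have hxs : x ≤ s := le_trans (le_max_left x y) hs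
        have hys : y ≤ s := le_trans (le_max_right x y) hs
        have := congrFun hxy ⟨s, hsS⟩
        dsimp only at this
        rw [dif_pos (hbnd x hxs), dif_pos (hbnd y hys)] at this
        have h2 := ((Ordinal.ToType.mk (o := (d ⟨s, hsS⟩).ord))).injective this
        exact oidx_inj (show oidx x = oidx y by simpa using Subtype.ext_iff.1 h2)
      exact Cardinal.mk_le_of_injective hinj
    have hfinal : c ^ κ ≤ Order.succ c := by
      calc c ^ κ ≤ (Cardinal.prod d) ^ κ := Cardinal.power_le_power_right hc_le
        _ = Cardinal.prod (fun s => d s ^ κ) := prod_power d κ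
        _ ≤ Cardinal.prod (fun _ : S => c) := Cardinal.prod_le_prod _ _ fun s => key _ (hdlt s)
        _ = c ^ #S := Cardinal.prod_const' S c
        _ = c ^ c.ord.cof := by rw [hScard]
        _ = Order.succ c := SCH c hc hcof_lt h2cof
    exact ⟨hfinal, fun hreg => absurd hreg (not_lt.2 hcof)⟩

/-! ### Counting classes in the cardinal ultraproduct -/

/-- If every class in `P` has a representative which is `D`-a.e. below `e`, then
`#P ≤ e ^ #ι`. -/
theorem mk_le_of_bounded {ι : Type u} (D : Ultrafilter ι) (lam : ι → Cardinal.{u})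
    (e : Cardinal.{u}) (he : 0 < e) (P : Set (Quotient (cardSetoid D lam)))
    (hP : ∀ q ∈ P, {i | oidx (Quotient.out q i) < e.ord} ∈ D) :
    (#P) ≤ e ^ #ι := by
  classical
  haveI hne : Nonempty e.ord.ToType := toType_nonempty_of_pos he
  have hinj : Function.Injective (fun p : P => Quotient.mk (cardSetoid D (fun _ : ι => e))
      (fun i => if h : oidx (Quotient.out p.1 i) < e.ord then
        (Ordinal.ToType.mk (o := e.ord)) ⟨oidx (Quotient.out p.1 i), h⟩
        else Classical.arbitrary _)) := by
    intro p p' hpp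
    dsimp only at hpp
    have hD : {i | (if h : oidx (Quotient.out p.1 i) < e.ord then
        (Ordinal.ToType.mk (o := e.ord)) ⟨oidx (Quotient.out p.1 i), h⟩
        else Classical.arbitrary _) = (if h : oidx (Quotient.out p'.1 i) < e.ord then
        (Ordinal.ToType.mk (o := e.ord)) ⟨oidx (Quotient.out p'.1 i), h⟩
        else Classical.arbitrary _)} ∈ D := Quotient.exact hpp
    have hkey : {i | Quotient.out p.1 i = Quotient.out p'.1 i} ∈ D := by
      have hmem := Filter.inter_mem (Filter.inter_mem hD (hP p.1 p.2)) (hP p'.1 p'.2)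
      refine Filter.mem_of_superset hmem ?_
      rintro i ⟨⟨h1, h2⟩, h3⟩
      simp only [Set.mem_setOf_eq] at h1 h2 h3 ⊢
      rw [dif_pos h2, dif_pos h3] at h1
      have h4 := ((Ordinal.ToType.mk (o := e.ord))).injective h1
      exact oidx_inj (show oidx _ = oidx _ by simpa using Subtype.ext_iff.1 h4)
    apply Subtype.ext
    rw [← Quotient.out_eq p.1, ← Quotient.out_eq p'.1]
    exact Quotient.sound hkey
  calc #P ≤ #(Quotient (cardSetoid D (fun _ : ι => e))) := Cardinal.mk_le_of_injective hinj
    _ ≤ #(∀ _ : ι, e.ord.ToType) := Cardinal.mk_quotient_le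
    _ = e ^ #ι := by
      rw [Cardinal.mk_pi]
      simp only [Cardinal.mk_ord_toType]
      exact Cardinal.prod_const' ι e

/-! ### The easy direction -/

theorem piDensity_BUP_le {ι : Type u} (D : Ultrafilter ι) (A : ι → Type u)
    [∀ i, BooleanAlgebra (A i)] [∀ i, Infinite (A i)] :
    piDensity (BUP D A) ≤ cardUP D (fun i => piDensity (A i)) := by
  classical
  set lam : ι → Cardinal.{u} := fun i => piDensity (A i) with hlam
  choose Y hY1 hY2 hY3 using fun i => exists_piDensity_set (A i)
  haveI hneT : ∀ i, Nonempty ((lam i).ord.ToType) := fun i =>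
    toType_nonempty_of_pos (lt_of_lt_of_le Cardinal.aleph0_pos (aleph0_le_piDensity (A i)))
  have hEe : ∀ i, Nonempty ((lam i).ord.ToType ≃ (Y i)) := fun i => by
    rw [← Cardinal.eq, Cardinal.mk_ord_toType]
    exact hY3 i
  have E : ∀ i, (lam i).ord.ToType ≃ (Y i) := fun i => (hEe i).some
  set g : (∀ i, (lam i).ord.ToType) → BUP D A :=
    fun f => bmk D A (fun i => ((E i) (f i) : A i)) with hg
  have hresp : ∀ f f' : (∀ i, (lam i).ord.ToType), (cardSetoid D lam).r f f' → g f = g f' := by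
    intro f f' hff
    apply (bmk_eq_bmk D A).2
    refine Filter.mem_of_superset hff fun i hi => ?_
    simp only [Set.mem_setOf_eq] at hi ⊢
    rw [hi]
  set G : Quotient (cardSetoid D lam) → BUP D A := Quotient.lift g hresp with hG
  have hZ1 : ∀ z ∈ Set.range G, z ≠ ⊥ := by
    rintro z ⟨q, rfl⟩
    obtain ⟨f, rfl⟩ := Quotient.exists_rep q
    intro hbot
    have hmem := (bmk_eq_bot_iff D A).1 hbot
    have hempty : {i | ((E i) (f i) : A i) = ⊥} = ∅ := by
      ext i
      simp only [Set.mem_setOf_eq, Set.mem_empty_iff_false, iff_false]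
      exact hY1 i _ ((E i) (f i)).2
    rw [hempty] at hmem
    exact Filter.empty_notMem _ hmem
  have hZ2 : ∀ b : BUP D A, b ≠ ⊥ → ∃ z ∈ Set.range G, z ≤ b := by
    intro b hb
    obtain ⟨g0, rfl⟩ := bmk_surjective D A b
    have hT : {i | g0 i ≠ ⊥} ∈ D := by
      have h1 : ¬ {i | g0 i = ⊥} ∈ D := fun hmem => hb ((bmk_eq_bot_iff D A).2 hmem)
      have h2 := Ultrafilter.compl_mem_iff_notMem.2 h1
      rwa [show {i | g0 i = ⊥}ᶜ = {i | g0 i ≠ ⊥} from rfl] at h2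
    set f : ∀ i, (lam i).ord.ToType := fun i =>
      if h : ∃ y ∈ Y i, y ≤ g0 i then (E i).symm ⟨h.choose, h.choose_spec.1⟩
      else Classical.arbitrary _ with hf
    refine ⟨G (Quotient.mk _ f), ⟨_, rfl⟩, ?_⟩
    show g f ≤ bmk D A g0
    apply (bmk_le_bmk D A).2
    refine Filter.mem_of_superset hT fun i hi => ?_
    simp only [Set.mem_setOf_eq] at hi ⊢
    have hex : ∃ y ∈ Y i, y ≤ g0 i := hY2 i (g0 i) hi
    have hfi : f i = (E i).symm ⟨hex.choose, hex.choose_spec.1⟩ := by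
      rw [hf]; exact dif_pos hex
    rw [hfi, Equiv.apply_symm_apply]
    exact hex.choose_spec.2
  calc piDensity (BUP D A) ≤ #(Set.range G) := piDensity_le_mk _ hZ1 hZ2
    _ ≤ #(Quotient (cardSetoid D lam)) := Cardinal.mk_range_le
    _ = cardUP D lam := rfl

end PiDensityAux

end Aux

open PiDensityAux

/-- Theorem 1.1: assuming SCH, if `2 ^ κ < π Aᵢ` for all `i ∈ κ` and `D` is an
ultrafilter on `κ`, then `π (∏ Aᵢ / D) = |∏ π(Aᵢ) / D|`. -/
theorem piDensity_ultraproduct_eq_of_SCH {ι : Type u}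
    (SCH : ∀ l : Cardinal.{u}, ℵ₀ ≤ l → l.ord.cof < l → 2 ^ l.ord.cof < l →
      l ^ l.ord.cof = Order.succ l)
    (D : Ultrafilter ι) (A : ι → Type u)
    [∀ i, BooleanAlgebra (A i)] [∀ i, Infinite (A i)]
    (h : ∀ i, 2 ^ #ι < piDensity (A i)) :
    piDensity (BUP D A) = cardUP D (fun i => piDensity (A i)) := by
  classical
  haveI hιne : Nonempty ι := by
    obtain ⟨i0, -⟩ := Filter.nonempty_of_mem (Filter.univ_mem (f := (D : Filter ι)))
    exact ⟨i0⟩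
  refine le_antisymm (piDensity_BUP_le D A) ?_
  set lam : ι → Cardinal.{u} := fun i => piDensity (A i) with hlam
  obtain ⟨X, hX1, hX2, hXc⟩ := exists_piDensity_set (BUP D A)
  set μ := piDensity (BUP D A) with hμ
  choose rep hrepx using fun x : X => bmk_surjective D A x.1
  -- Step 1: `D`-almost everywhere, `lam i ≤ μ`.
  have hS : {i | lam i ≤ μ} ∈ D := by
    by_contra hcon
    have hSc : {i | lam i ≤ μ}ᶜ ∈ D := Ultrafilter.compl_mem_iff_notMem.2 hcon
    have hw : ∀ i, ∃ a : A i, a ≠ ⊥ ∧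
        (lam i ≤ μ ∨ ∀ x : X, rep x i ≠ ⊥ → ¬ rep x i ≤ a) := by
      intro i
      by_cases hi : lam i ≤ μ
      · exact ⟨⊤, top_ne_bot, Or.inl hi⟩
      · have hTlt : #(Set.range fun x : X => rep x i) < piDensity (A i) := by
          refine lt_of_le_of_lt Cardinal.mk_range_le ?_
          rw [← hXc]
          exact not_le.1 hi
        obtain ⟨a, ha1, ha2⟩ := exists_avoid _ hTlt
        exact ⟨a, ha1, Or.inr fun x hx1 hx2 => ha2 _ ⟨x, rfl⟩ hx1 hx2⟩
    choose a ha1 ha2 using hw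
    have habot : bmk D A a ≠ ⊥ := by
      intro hbot
      have hmem := (bmk_eq_bot_iff D A).1 hbot
      have hem : {i | a i = ⊥} = ∅ := by
        ext i
        simp only [Set.mem_setOf_eq, Set.mem_empty_iff_false, iff_false]
        exact ha1 i
      rw [hem] at hmem
      exact Filter.empty_notMem _ hmem
    obtain ⟨x, hxX, hxle⟩ := hX2 _ habot
    have hxb : x ≠ ⊥ := hX1 x hxX
    have s1 : {i | rep ⟨x, hxX⟩ i ≤ a i} ∈ D := by
      have hle2 : bmk D A (rep ⟨x, hxX⟩) ≤ bmk D A a := by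
        rw [hrepx ⟨x, hxX⟩]
        exact hxle
      exact (bmk_le_bmk D A).1 hle2
    have s2 : {i | rep ⟨x, hxX⟩ i ≠ ⊥} ∈ D := by
      have h1 : ¬ {i | rep ⟨x, hxX⟩ i = ⊥} ∈ D := by
        intro hmem
        refine hxb ?_
        have h2b := (bmk_eq_bot_iff D A).2 hmem
        rwa [hrepx ⟨x, hxX⟩] at h2b
      have h2 := Ultrafilter.compl_mem_iff_notMem.2 h1
      rwa [show {i | rep ⟨x, hxX⟩ i = ⊥}ᶜ = {i | rep ⟨x, hxX⟩ i ≠ ⊥} from rfl] at h2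
    obtain ⟨i, ⟨hi1, hi2⟩, hi3⟩ :=
      Filter.nonempty_of_mem (Filter.inter_mem (Filter.inter_mem hSc s1) s2)
    exact (ha2 i).resolve_left hi1 ⟨x, hxX⟩ hi3 hi2
  obtain ⟨j, hj⟩ := Filter.nonempty_of_mem hS
  have hμinf : ℵ₀ ≤ μ := (aleph0_le_piDensity (A j)).trans hj
  have hμpos : (0 : Cardinal) < μ := Cardinal.aleph0_pos.trans_le hμinf
  have h2μ : 2 ^ #ι < μ := lt_of_lt_of_le (h j) hj
  -- almost everywhere boundedness of representatives
  have hbnd : ∀ q : Quotient (cardSetoid D lam),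
      {i | oidx (Quotient.out q i) < μ.ord} ∈ D := by
    intro q
    refine Filter.mem_of_superset hS fun i hi => ?_
    simp only [Set.mem_setOf_eq] at hi ⊢
    exact lt_of_lt_of_le (oidx_lt _) (Cardinal.ord_le_ord.2 hi)
  have hνμκ : cardUP D lam ≤ μ ^ #ι := by
    have hb := mk_le_of_bounded D lam μ hμpos Set.univ (fun q _ => hbnd q)
    rwa [Cardinal.mk_univ] at hb
  rcases lt_or_ge (#ι) μ.ord.cof with hcof | hcof
  · -- `κ < cf μ`: here `μ ^ κ = μ`.
    have hpow : μ ^ #ι = μ := by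
      have hge : μ ≤ μ ^ #ι := by
        conv_lhs => rw [← Cardinal.power_one μ]
        exact Cardinal.power_le_power_left (ne_of_gt hμpos)
          (Cardinal.one_le_iff_ne_zero.2 (Cardinal.mk_ne_zero ι))
      rcases lt_or_ge (#ι) ℵ₀ with hfin | hinfκ
      · obtain ⟨n, hn⟩ := Cardinal.lt_aleph0.1 hfin
        refine le_antisymm ?_ hge
        rw [hn]
        exact Cardinal.power_nat_le hμinf
      · exact (power_le_succ SCH hinfκ μ hμinf h2μ).2 hcof
    exact hνμκ.trans_eq hpow
  · -- `cf μ ≤ κ`: the singular case.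
    have hκinf : ℵ₀ ≤ #ι := by
      have h1 : ℵ₀ ≤ μ.ord.cof := Ordinal.aleph0_le_cof.2 (Cardinal.isSuccLimit_ord hμinf)
      exact h1.trans hcof
    have h2κinf : ℵ₀ ≤ 2 ^ #ι := hκinf.trans (Cardinal.cantor _).le
    have hκμ : #ι < μ := (Cardinal.cantor _).trans h2μ
    have hsucc_lt : ∀ x : Cardinal.{u}, x < μ → Order.succ x < μ := by
      intro x hx
      rcases lt_or_ge (Order.succ x) μ with hlt | hge
      · exact hlt
      · exfalso
        have hcx : μ = Order.succ x := le_antisymm hge (Order.succ_le_of_lt hx)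
        have hreg : μ.IsRegular := by
          rcases le_or_gt ℵ₀ x with hd | hd
          · rw [hcx]; exact Cardinal.isRegular_succ hd
          · have h1 : Order.succ x ≤ ℵ₀ := Order.succ_le_of_lt hd
            have h2 : μ = ℵ₀ := le_antisymm (hcx ▸ h1) hμinf
            rw [h2]; exact Cardinal.isRegular_aleph0
        rw [hreg.cof_eq] at hcof
        exact absurd (hcof.trans_lt hκμ) (lt_irrefl _)
    by_cases hT : ∃ ρ : ι → Cardinal.{u}, (∀ i, ρ i < lam i) ∧ ∀ c < μ, {i | c ≤ ρ i} ∈ D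
    · -- a scale-like family exists: contradiction with `X` being dense.
      exfalso
      obtain ⟨ρ, hρ1, hρ2⟩ := hT
      have hXe : Nonempty (μ.ord.ToType ≃ X) := by
        rw [← Cardinal.eq, Cardinal.mk_ord_toType]
        exact hXc
      obtain ⟨EX⟩ := hXe
      have hw : ∀ i, ∃ a : A i, a ≠ ⊥ ∧
          ∀ α : μ.ord.ToType, oidx α < (ρ i).ord → rep (EX α) i ≠ ⊥ → ¬ rep (EX α) i ≤ a := by
        intro i
        have hTcard : #(Set.range (fun p : {α : μ.ord.ToType // oidx α < (ρ i).ord} =>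
            rep (EX p.1) i)) < piDensity (A i) := by
          refine lt_of_le_of_lt Cardinal.mk_range_le ?_
          refine lt_of_le_of_lt ?_ (hρ1 i)
          have hinj2 : Function.Injective (fun p : {α : μ.ord.ToType // oidx α < (ρ i).ord} =>
              (Ordinal.ToType.mk (o := (ρ i).ord)) ⟨oidx p.1, p.2⟩) := by
            intro p q hpq
            have h2 := ((Ordinal.ToType.mk (o := (ρ i).ord))).injective hpq
            exact Subtype.ext (oidx_inj (show oidx _ = oidx _ by
              simpa using Subtype.ext_iff.1 h2))
          have h3 := Cardinal.mk_le_of_injective hinj2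
          rwa [Cardinal.mk_ord_toType] at h3
        obtain ⟨a, ha1, ha2⟩ := exists_avoid _ hTcard
        exact ⟨a, ha1, fun α hα h1 h2 => ha2 _ ⟨⟨α, hα⟩, rfl⟩ h1 h2⟩
      choose a ha1 ha2 using hw
      have habot : bmk D A a ≠ ⊥ := by
        intro hbot
        have hmem := (bmk_eq_bot_iff D A).1 hbot
        have hem : {i | a i = ⊥} = ∅ := by
          ext i
          simp only [Set.mem_setOf_eq, Set.mem_empty_iff_false, iff_false]
          exact ha1 i
        rw [hem] at hmem
        exact Filter.empty_notMem _ hmem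
      obtain ⟨x, hxX, hxle⟩ := hX2 _ habot
      have hxb : x ≠ ⊥ := hX1 x hxX
      set α := EX.symm ⟨x, hxX⟩ with hα
      have hEXα : EX α = ⟨x, hxX⟩ := EX.apply_symm_apply _
      have hcard : Order.succ ((oidx α).card) < μ := hsucc_lt _ (Cardinal.lt_ord.1 (oidx_lt α))
      have s0 : {i | Order.succ ((oidx α).card) ≤ ρ i} ∈ D := hρ2 _ hcard
      have s1 : {i | rep ⟨x, hxX⟩ i ≤ a i} ∈ D := by
        have hle2 : bmk D A (rep ⟨x, hxX⟩) ≤ bmk D A a := by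
          rw [hrepx ⟨x, hxX⟩]
          exact hxle
        exact (bmk_le_bmk D A).1 hle2
      have s2 : {i | rep ⟨x, hxX⟩ i ≠ ⊥} ∈ D := by
        have h1 : ¬ {i | rep ⟨x, hxX⟩ i = ⊥} ∈ D := by
          intro hmem
          refine hxb ?_
          have h2 := (bmk_eq_bot_iff D A).2 hmem
          rwa [hrepx ⟨x, hxX⟩] at h2
        have h2 := Ultrafilter.compl_mem_iff_notMem.2 h1
        rwa [show {i | rep ⟨x, hxX⟩ i = ⊥}ᶜ = {i | rep ⟨x, hxX⟩ i ≠ ⊥} from rfl] at h2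
      obtain ⟨i, ⟨hi0, hi1⟩, hi2⟩ :=
        Filter.nonempty_of_mem (Filter.inter_mem (Filter.inter_mem s0 s1) s2)
      have hlt : oidx α < (ρ i).ord := by
        rw [Cardinal.lt_ord]
        exact lt_of_lt_of_le (Order.lt_succ _) hi0
      have hfin := ha2 i α hlt
      rw [hEXα] at hfin
      exact hfin hi2 hi1
    · -- no such family: every class is bounded below `μ`, giving `ν ≤ μ`.
      push_neg at hT
      set Qs : μ.ord.ToType → Set (Quotient (cardSetoid D lam)) := fun α =>
        {q | {i | oidx (Quotient.out q i) < ((oidx α).card ⊔ 2 ^ #ι).ord} ∈ D} with hQs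
      have hcover : ∀ q : Quotient (cardSetoid D lam), ∃ α, q ∈ Qs α := by
        intro q
        have hρq : ∀ i, (oidx (Quotient.out q i)).card < lam i := fun i =>
          Cardinal.lt_ord.1 (oidx_lt _)
        obtain ⟨c, hc1, hc2⟩ := hT (fun i => (oidx (Quotient.out q i)).card) hρq
        have hc3 : {i | (oidx (Quotient.out q i)).card < c} ∈ D := by
          have h2 := Ultrafilter.compl_mem_iff_notMem.2 hc2
          refine Filter.mem_of_superset h2 fun i hi => ?_
          simp only [Set.mem_compl_iff, Set.mem_setOf_eq, not_le] at hi
          exact hi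
        refine ⟨(Ordinal.ToType.mk (o := μ.ord)) ⟨c.ord, Cardinal.ord_lt_ord.2 hc1⟩, ?_⟩
        show {i | oidx (Quotient.out q i) <
          ((oidx ((Ordinal.ToType.mk (o := μ.ord)) ⟨c.ord, Cardinal.ord_lt_ord.2 hc1⟩)).card
            ⊔ 2 ^ #ι).ord} ∈ D
        refine Filter.mem_of_superset hc3 fun i hi => ?_
        simp only [Set.mem_setOf_eq] at hi ⊢
        rw [Cardinal.lt_ord]
        refine lt_of_lt_of_le hi ?_
        rw [oidx_enum, Cardinal.card_ord]
        exact le_sup_left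
      have hQbound : ∀ α, #(Qs α) ≤ μ := by
        intro α
        set e := (oidx α).card ⊔ 2 ^ #ι with he
        have hepos : (0 : Cardinal) < e :=
          lt_of_lt_of_le Cardinal.aleph0_pos (h2κinf.trans le_sup_right)
        have hKb := mk_le_of_bounded D lam e hepos (Qs α) (fun q hq => hq)
        have heμ : e < μ := max_lt (Cardinal.lt_ord.1 (oidx_lt α)) h2μ
        rcases le_or_gt e (2 ^ #ι) with hcase | hcase
        · have h1 : e ^ #ι ≤ (2 ^ #ι) ^ #ι := Cardinal.power_le_power_right hcase
          rw [← Cardinal.power_mul, Cardinal.mul_eq_self hκinf] at h1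
          exact hKb.trans (h1.trans h2μ.le)
        · have heinf : ℵ₀ ≤ e := h2κinf.trans hcase.le
          have h1 := (power_le_succ SCH hκinf e heinf hcase).1
          exact hKb.trans (h1.trans (Order.succ_le_of_lt heμ))
      have hfinal : cardUP D lam ≤ μ * μ := by
        have hU : (Set.univ : Set (Quotient (cardSetoid D lam))) = ⋃ α, Qs α :=
          (Set.eq_univ_iff_forall.2 fun q => Set.mem_iUnion.2 (hcover q)).symm
        haveI : Nonempty μ.ord.ToType := toType_nonempty_of_pos hμpos
        calc cardUP D lam = #(Set.univ : Set (Quotient (cardSetoid D lam))) :=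
              Cardinal.mk_univ.symm
          _ = #(⋃ α, Qs α) := by rw [hU]
          _ ≤ #(μ.ord.ToType) * ⨆ α, #(Qs α) := Cardinal.mk_iUnion_le _
          _ ≤ μ * μ := by
              rw [Cardinal.mk_ord_toType]
              exact mul_le_mul' le_rfl (ciSup_le' hQbound)
      rwa [Cardinal.mul_eq_self hμinf] at hfinal
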